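/- Let U ⊆ ℝ^4 be open (ℝ^4 with the Minkowski form η, n = 2), (ξ, N) a null frame on U, and Z : U → ℝ^4 differentiable and parallel (fderiv ℝ Z p = 0 for all p). Assume: (i) at every p, A*_ξ(p) and A_N(p) are symmetric on screen vectors; (ii) (constant angle) for every p and every screen vector v at p, the derivative of q ↦ η(Z q, ξ q) * η(Z q, N q) at p in the direction v vanishes; (iii) Z*(p) ≠ 0 for all p, so that (since η is positive definite on screen vectors) η(Z* p, Z* p) > 0 and T := Z*/√(η(Z*, Z*)) is a well-defined differentiable unit screen field; (iv) W : U → ℝ^4 is differentiable with, at every p, η(W p, ξ p) = 0, η(W p, N p) = 0, η(W p, W p) = 1 and η(W p, Z* p) = 0; (v) (trace-free) η(A_{Z⊥}(p)(T p), T p) + η(A_{Z⊥}(p)(W p), W p) = 0 for all p. Then at every p ∈ U: P_p(D_{T p} T(p)) = 0, P_p(D_{T p} W(p)) = 0, P_p(D_{W p} T(p)) = 0 and P_p(D_{W p} W(p)) = 0; i.e., the screen covariant derivatives of the orthonormal screen frame {T, W} all vanish, so the screen distribution is flat. (Flat-Minkowski-ambient form of the paper's theorem that a screen integrable constant angle null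 hypersurface with respect to a parallel field and with tr A_{Z⊥} ≡ 0 has flat screen distribution.) -/

import Mathlib

open scoped BigOperators

noncomputable section

/-- Euclidean space `ℝ^m`. -/
abbrev E (m : ℕ) : Type := EuclideanSpace ℝ (Fin m)

/-- The Minkowski bilinear form `η(x,y) = -(x 0)(y 0) + ∑_{i≥1} (x i)(y i)` on `ℝ^(n+2)`. -/
def eta {n : ℕ} (x y : E (n + 2)) : ℝ :=
  (∑ i, x i * y i) - 2 * (x 0 * y 0)

/-- Screen projection `P_p(w) = w - η(w,N)ξ - η(w,ξ)N` determined by the null frame at a point. -/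
def sproj {n : ℕ} (xi N w : E (n + 2)) : E (n + 2) :=
  w - eta w N • xi - eta w xi • N

/-- Screen shape operator `A*_ξ(p)(v) = -P_p(D_v ξ (p))`. -/
def Astar {n : ℕ} (xi N : E (n + 2) → E (n + 2)) (p v : E (n + 2)) : E (n + 2) :=
  -sproj (xi p) (N p) (fderiv ℝ xi p v)

/-- Shape operator `A_N(p)(v) = -P_p(D_v N (p))`. -/
def AN {n : ℕ} (xi N : E (n + 2) → E (n + 2)) (p v : E (n + 2)) : E (n + 2) :=
  -sproj (xi p) (N p) (fderiv ℝ N p v)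

/-- Transversal one-form `τ_p(v) = η(D_v N(p), ξ p)`. -/
def tau {n : ℕ} (xi N : E (n + 2) → E (n + 2)) (p v : E (n + 2)) : ℝ :=
  eta (fderiv ℝ N p v) (xi p)

/-- Screen part `Z*(p) = P_p(Z p)` of a vector field. -/
def Zstar {n : ℕ} (xi N Z : E (n + 2) → E (n + 2)) (p : E (n + 2)) : E (n + 2) :=
  sproj (xi p) (N p) (Z p)

/-- `A_{Z⊥}(p)(v) = η(Z p, N p) • A*_ξ(p)(v) + η(Z p, ξ p) • A_N(p)(v)`. -/
def AZperp {n : ℕ} (xi N Z : E (n + 2) → E (n + 2)) (p v : E (n + 2)) : E (n + 2) :=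
  eta (Z p) (N p) • Astar xi N p v + eta (Z p) (xi p) • AN xi N p v

/-! ### Auxiliary algebraic lemmas for `eta` -/

lemma eta_comm {n : ℕ} (x y : E (n+2)) : eta x y = eta y x := by
  simp [eta, mul_comm]

lemma eta_add_left {n : ℕ} (x y z : E (n+2)) : eta (x + y) z = eta x z + eta y z := by
  simp [eta, PiLp.add_apply, add_mul, Finset.sum_add_distrib]; ring

lemma eta_smul_left {n : ℕ} (c : ℝ) (x z : E (n+2)) : eta (c • x) z = c * eta x z := by
  simp [eta, PiLp.smul_apply, smul_eq_mul, Finset.mul_sum, mul_assoc, mul_sub, mul_left_comm]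

lemma eta_sub_left {n : ℕ} (x y z : E (n+2)) : eta (x - y) z = eta x z - eta y z := by
  simp [eta, PiLp.sub_apply, sub_mul, Finset.sum_sub_distrib]; ring

lemma eta_neg_left {n : ℕ} (x z : E (n+2)) : eta (-x) z = - eta x z := by
  simp [eta, PiLp.neg_apply]; ring

lemma eta_zero_left {n : ℕ} (z : E (n+2)) : eta 0 z = 0 := by
  simp [eta, PiLp.zero_apply]

lemma eta_add_right {n : ℕ} (x y z : E (n+2)) : eta x (y + z) = eta x y + eta x z := by
  rw [eta_comm x (y + z), eta_add_left, eta_comm y x, eta_comm z x]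

lemma eta_smul_right {n : ℕ} (c : ℝ) (x z : E (n+2)) : eta x (c • z) = c * eta x z := by
  rw [eta_comm x (c • z), eta_smul_left, eta_comm z x]

lemma eta_sub_right {n : ℕ} (x y z : E (n+2)) : eta x (y - z) = eta x y - eta x z := by
  rw [eta_comm x (y - z), eta_sub_left, eta_comm y x, eta_comm z x]

lemma eta_zero_right {n : ℕ} (z : E (n+2)) : eta z 0 = 0 := by
  rw [eta_comm, eta_zero_left]

/-! ### `eta` as a bounded bilinear map, and its derivative -/

lemma eta_eq_inner {n : ℕ} (x y : E (n+2)) : eta x y = (inner ℝ x y : ℝ) - 2 * (x 0 * y 0) := by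
  simp [eta, PiLp.inner_apply, RCLike.inner_apply, conj_trivial, mul_comm]

lemma abs_apply_le_norm {n : ℕ} (x : E (n+2)) (i : Fin (n+2)) : |x i| ≤ ‖x‖ := by
  rw [EuclideanSpace.norm_eq x]
  have h1 : |x i| = Real.sqrt (‖x i‖^2) := by rw [Real.sqrt_sq_eq_abs]; simp
  rw [h1]
  apply Real.sqrt_le_sqrt
  exact Finset.single_le_sum (f := fun j => ‖x j‖^2) (fun j _ => sq_nonneg _) (Finset.mem_univ i)

lemma isBoundedBilinearMap_eta {n : ℕ} :
    IsBoundedBilinearMap ℝ (fun p : E (n+2) × E (n+2) => eta p.1 p.2) := by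
  constructor
  · intro x1 x2 y; simp only [eta_eq_inner, inner_add_left, PiLp.add_apply]; ring
  · intro c x y; simp only [eta_eq_inner, real_inner_smul_left, PiLp.smul_apply, smul_eq_mul]; ring
  · intro x y1 y2; simp only [eta_eq_inner, inner_add_right, PiLp.add_apply]; ring
  · intro c x y; simp only [eta_eq_inner, real_inner_smul_right, PiLp.smul_apply, smul_eq_mul]; ring
  · refine ⟨3, by norm_num, fun x y => ?_⟩
    rw [eta_eq_inner]
    have h1 := abs_real_inner_le_norm x y
    have h2 := abs_apply_le_norm x 0
    have h3 := abs_apply_le_norm y 0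
    have h4 : |2 * (x 0 * y 0)| ≤ 2 * (‖x‖ * ‖y‖) := by
      rw [abs_mul, abs_mul, abs_two]
      have := mul_le_mul h2 h3 (abs_nonneg _) (norm_nonneg _)
      nlinarith [abs_nonneg (x 0), abs_nonneg (y 0)]
    calc ‖(inner ℝ x y : ℝ) - 2 * (x 0 * y 0)‖
        ≤ |(inner ℝ x y : ℝ)| + |2 * (x 0 * y 0)| := abs_sub _ _
      _ ≤ ‖x‖*‖y‖ + 2*(‖x‖*‖y‖) := add_le_add h1 h4
      _ = 3 * ‖x‖ * ‖y‖ := by ring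

lemma hasFDerivAt_eta {n : ℕ} {m : ℕ} {f g : E (m+2) → E (n+2)}
    {f' g' : E (m+2) →L[ℝ] E (n+2)} {p : E (m+2)}
    (hf : HasFDerivAt f f' p) (hg : HasFDerivAt g g' p) :
    HasFDerivAt (fun q => eta (f q) (g q))
      ((isBoundedBilinearMap_eta.deriv (f p, g p)).comp (f'.prod g')) p :=
  (isBoundedBilinearMap_eta.hasFDerivAt (f p, g p)).comp (f := fun q => (f q, g q)) p (hf.prodMk hg)

lemma eta_deriv_apply {n m : ℕ} {f g : E (m+2) → E (n+2)}
    {f' g' : E (m+2) →L[ℝ] E (n+2)} {p : E (m+2)} (v : E (m+2)) :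
    ((isBoundedBilinearMap_eta.deriv (f p, g p)).comp (f'.prod g')) v
      = eta (f p) (g' v) + eta (f' v) (g p) := by
  simp [IsBoundedBilinearMap.deriv_apply]

/-! ### Positivity of `eta` on screen vectors -/

lemma scalar_pos (t0 t1 t2 t3 v0 v1 v2 v3 : ℝ)
    (h1 : t1^2 + t2^2 + t3^2 - t0^2 = -2)
    (h2 : v1*t1 + v2*t2 + v3*t3 - v0*t0 = 0)
    (hne : ¬(v0 = 0 ∧ v1 = 0 ∧ v2 = 0 ∧ v3 = 0)) :
    0 < v1^2 + v2^2 + v3^2 - v0^2 := by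
  have ht2 : 2 ≤ t0^2 := by nlinarith [sq_nonneg t1, sq_nonneg t2, sq_nonneg t3]
  by_cases hsp : v1 = 0 ∧ v2 = 0 ∧ v3 = 0
  · exfalso
    obtain ⟨e1, e2, e3⟩ := hsp
    subst e1; subst e2; subst e3
    have hv00 : v0 = 0 := by
      have h3 : v0 * t0 = 0 := by linarith [h2]
      rcases mul_eq_zero.1 h3 with h | h
      · exact h
      · nlinarith
    exact hne ⟨hv00, rfl, rfl, rfl⟩
  · have hu : 0 < v1^2 + v2^2 + v3^2 := by
      rcases not_and_or.1 hsp with h | h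
      · nlinarith [sq_nonneg v2, sq_nonneg v3, sq_pos_of_ne_zero h]
      rcases not_and_or.1 h with h | h
      · nlinarith [sq_nonneg v1, sq_nonneg v3, sq_pos_of_ne_zero h]
      · nlinarith [sq_nonneg v1, sq_nonneg v2, sq_pos_of_ne_zero h]
    have h3 : v0 * t0 = v1*t1 + v2*t2 + v3*t3 := by linarith
    have h4 : v0^2 * t0^2 = (v1*t1 + v2*t2 + v3*t3)^2 := by rw [← h3]; ring
    have h5 : t0^2 = t1^2 + t2^2 + t3^2 + 2 := by linarith
    have expand : t0^2 * (v1^2 + v2^2 + v3^2 - v0^2) - 2*(v1^2 + v2^2 + v3^2) =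
        (v1*t2 - v2*t1)^2 + (v1*t3 - v3*t1)^2 + (v2*t3 - v3*t2)^2 := by
      linear_combination (v1^2 + v2^2 + v3^2) * h5 - h4
    have key : t0^2 * (v1^2 + v2^2 + v3^2 - v0^2) ≥ 2 * (v1^2 + v2^2 + v3^2) := by
      nlinarith [expand, sq_nonneg (v1*t2 - v2*t1), sq_nonneg (v1*t3 - v3*t1),
        sq_nonneg (v2*t3 - v3*t2)]
    by_contra hG
    push_neg at hG
    have hle : t0^2 * (v1^2 + v2^2 + v3^2 - v0^2) ≤ 0 :=
      mul_nonpos_of_nonneg_of_nonpos (sq_nonneg t0) hG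
    linarith

lemma eta_expand (x y : E 4) :
    eta x y = x 1 * y 1 + x 2 * y 2 + x 3 * y 3 - x 0 * y 0 := by
  show (∑ i : Fin 4, x i * y i) - 2*(x 0 * y 0) = _
  rw [Fin.sum_univ_four]; ring

lemma screen_pos (xi N v : E 4) (hxx : eta xi xi = 0) (hNN : eta N N = 0)
    (hxN : eta xi N = 1) (hv1 : eta v xi = 0) (hv2 : eta v N = 0) (hv0 : v ≠ 0) :
    0 < eta v v := by
  rw [eta_expand] at hxx hNN hxN hv1 hv2 ⊢
  have hne : ¬(v 0 = 0 ∧ v 1 = 0 ∧ v 2 = 0 ∧ v 3 = 0) := by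
    rintro ⟨e0, e1, e2, e3⟩
    apply hv0
    have : ∀ i : Fin 4, v i = 0 := by
      intro i; fin_cases i <;> assumption
    exact PiLp.ext this
  have h := scalar_pos (xi 0 - N 0) (xi 1 - N 1) (xi 2 - N 2) (xi 3 - N 3)
      (v 0) (v 1) (v 2) (v 3) (by ring_nf; nlinarith [hxx, hNN, hxN])
      (by linarith [hv1, hv2, (by ring : v 1 * (xi 1 - N 1) + v 2 * (xi 2 - N 2)
          + v 3 * (xi 3 - N 3) - v 0 * (xi 0 - N 0)
          = (v 1 * xi 1 + v 2 * xi 2 + v 3 * xi 3 - v 0 * xi 0)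
            - (v 1 * N 1 + v 2 * N 2 + v 3 * N 3 - v 0 * N 0))]) hne
  linarith [h]

/-! ### The basis lemma : a screen vector orthogonal to T and W vanishes -/

lemma eta_combo (g : Fin 4 → ℝ) (a b c d u : E 4) :
    eta (g 0 • a + g 1 • b + g 2 • c + g 3 • d) u
      = g 0 * eta a u + g 1 * eta b u + g 2 * eta c u + g 3 * eta d u := by
  rw [eta_add_left, eta_add_left, eta_add_left, eta_smul_left, eta_smul_left,
    eta_smul_left, eta_smul_left]

lemma screen_basis_zero (xi N T W y : E 4)
    (hxx : eta xi xi = 0) (hNN : eta N N = 0) (hxN : eta xi N = 1)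
    (hTx : eta T xi = 0) (hTN : eta T N = 0) (hTT : eta T T = 1)
    (hWx : eta W xi = 0) (hWN : eta W N = 0) (hWW : eta W W = 1)
    (hTW : eta T W = 0)
    (hyx : eta y xi = 0) (hyN : eta y N = 0) (hyT : eta y T = 0) (hyW : eta y W = 0) :
    y = 0 := by
  set M : Fin 4 → E 4 := ![xi, N, T, W] with hM
  have hsum : ∀ g : Fin 4 → ℝ, ∑ i, g i • M i = g 0 • xi + g 1 • N + g 2 • T + g 3 • W := by
    intro g; rw [Fin.sum_univ_four]; simp [hM]
  have hNx : eta N xi = 1 := by rw [eta_comm]; exact hxN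
  have hxT : eta xi T = 0 := by rw [eta_comm]; exact hTx
  have hxW : eta xi W = 0 := by rw [eta_comm]; exact hWx
  have hNT : eta N T = 0 := by rw [eta_comm]; exact hTN
  have hNW : eta N W = 0 := by rw [eta_comm]; exact hWN
  have hWT : eta W T = 0 := by rw [eta_comm]; exact hTW
  have pair : ∀ g : Fin 4 → ℝ, ∀ u : E 4,
      eta (g 0 • xi + g 1 • N + g 2 • T + g 3 • W) u
        = g 0 * eta xi u + g 1 * eta N u + g 2 * eta T u + g 3 * eta W u :=
    fun g u => eta_combo g xi N T W u
  have hli : LinearIndependent ℝ M := by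
    rw [Fintype.linearIndependent_iff]
    intro g hg
    rw [hsum] at hg
    have e0 : g 0 = 0 := by
      have h := pair g N; rw [hg, eta_zero_left, hxN, hNN, hTN, hWN] at h; linarith
    have e1 : g 1 = 0 := by
      have h := pair g xi; rw [hg, eta_zero_left, hxx, hNx, hTx, hWx] at h; linarith
    have e2 : g 2 = 0 := by
      have h := pair g T; rw [hg, eta_zero_left, hxT, hNT, hTT, hWT] at h; linarith
    have e3 : g 3 = 0 := by
      have h := pair g W; rw [hg, eta_zero_left, hxW, hNW, hTW, hWW] at h; linarith
    intro i; fin_cases i <;> assumption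
  have hspan : Submodule.span ℝ (Set.range M) = ⊤ :=
    hli.span_eq_top_of_card_eq_finrank (by simp [finrank_euclideanSpace_fin])
  have hy : y ∈ Submodule.span ℝ (Set.range M) := by rw [hspan]; trivial
  obtain ⟨c, hc⟩ := (Submodule.mem_span_range_iff_exists_fun ℝ).1 hy
  rw [hsum] at hc
  have e0 : c 0 = 0 := by
    have h := pair c N; rw [hc, hyN, hxN, hNN, hTN, hWN] at h; linarith
  have e1 : c 1 = 0 := by
    have h := pair c xi; rw [hc, hyx, hxx, hNx, hTx, hWx] at h; linarith
  have e2 : c 2 = 0 := by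
    have h := pair c T; rw [hc, hyT, hxT, hNT, hTT, hWT] at h; linarith
  have e3 : c 3 = 0 := by
    have h := pair c W; rw [hc, hyW, hxW, hNW, hTW, hWW] at h; linarith
  rw [← hc, e0, e1, e2, e3]
  simp

/-! ### sproj pairing lemmas -/

lemma eta_sproj_screen {n : ℕ} (xi N u x : E (n+2))
    (h1 : eta xi x = 0) (h2 : eta N x = 0) :
    eta (sproj xi N u) x = eta u x := by
  unfold sproj
  rw [eta_sub_left, eta_sub_left, eta_smul_left, eta_smul_left, h1, h2]
  ring

lemma sproj_pair_xi {n : ℕ} (xi N u : E (n+2))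
    (hxx : eta xi xi = 0) (hxN : eta xi N = 1) :
    eta (sproj xi N u) xi = 0 := by
  unfold sproj
  rw [eta_sub_left, eta_sub_left, eta_smul_left, eta_smul_left, hxx, eta_comm N xi, hxN]
  ring

lemma sproj_pair_N {n : ℕ} (xi N u : E (n+2))
    (hNN : eta N N = 0) (hxN : eta xi N = 1) :
    eta (sproj xi N u) N = 0 := by
  unfold sproj
  rw [eta_sub_left, eta_sub_left, eta_smul_left, eta_smul_left, hNN, hxN]
  ring

lemma eta_SS {n : ℕ} (xi N Z : E (n+2))
    (hxx : eta xi xi = 0) (hNN : eta N N = 0) (hxN : eta xi N = 1) :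
    eta Z Z = 2*(eta Z xi * eta Z N) + eta (sproj xi N Z) (sproj xi N Z) := by
  unfold sproj
  simp only [eta_sub_left, eta_sub_right, eta_smul_left, eta_smul_right]
  rw [eta_comm xi Z, eta_comm N Z, eta_comm N xi, hxx, hNN, hxN]
  ring

/-- A screen integrable constant angle null hypersurface of `ℝ^4_1` with
respect to a parallel field, with trace-free `A_{Z⊥}`, has flat screen distribution
(flat Minkowski ambient form). -/
theorem constant_angle_trace_free_flat_screen
    (U : Set (E 4)) (hU : IsOpen U)
    (ξ N Z W T : E 4 → E 4)
    (hξd : ∀ p ∈ U, DifferentiableAt ℝ ξ p)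
    (hNd : ∀ p ∈ U, DifferentiableAt ℝ N p)
    (hZd : ∀ p ∈ U, DifferentiableAt ℝ Z p)
    (hWd : ∀ p ∈ U, DifferentiableAt ℝ W p)
    (hξξ : ∀ p ∈ U, eta (ξ p) (ξ p) = 0)
    (hNN : ∀ p ∈ U, eta (N p) (N p) = 0)
    (hξN : ∀ p ∈ U, eta (ξ p) (N p) = 1)
    (hpar : ∀ p ∈ U, fderiv ℝ Z p = 0)
    (hAsym : ∀ p ∈ U, ∀ v w : E 4,
      eta v (ξ p) = 0 → eta v (N p) = 0 → eta w (ξ p) = 0 → eta w (N p) = 0 →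
      eta (Astar ξ N p v) w = eta v (Astar ξ N p w))
    (hANsym : ∀ p ∈ U, ∀ v w : E 4,
      eta v (ξ p) = 0 → eta v (N p) = 0 → eta w (ξ p) = 0 → eta w (N p) = 0 →
      eta (AN ξ N p v) w = eta v (AN ξ N p w))
    (hang : ∀ p ∈ U, ∀ v : E 4, eta v (ξ p) = 0 → eta v (N p) = 0 →
      fderiv ℝ (fun q => eta (Z q) (ξ q) * eta (Z q) (N q)) p v = 0)
    (hZs0 : ∀ p ∈ U, Zstar ξ N Z p ≠ 0)
    (hT : ∀ p, T p = (Real.sqrt (eta (Zstar ξ N Z p) (Zstar ξ N Z p)))⁻¹ • Zstar ξ N Z p)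
    (hWξ : ∀ p ∈ U, eta (W p) (ξ p) = 0)
    (hWN : ∀ p ∈ U, eta (W p) (N p) = 0)
    (hWW : ∀ p ∈ U, eta (W p) (W p) = 1)
    (hWZ : ∀ p ∈ U, eta (W p) (Zstar ξ N Z p) = 0)
    (htrace : ∀ p ∈ U,
      eta (AZperp ξ N Z p (T p)) (T p) + eta (AZperp ξ N Z p (W p)) (W p) = 0) :
    ∀ p ∈ U,
      sproj (ξ p) (N p) (fderiv ℝ T p (T p)) = 0 ∧
      sproj (ξ p) (N p) (fderiv ℝ W p (T p)) = 0 ∧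
      sproj (ξ p) (N p) (fderiv ℝ T p (W p)) = 0 ∧
      sproj (ξ p) (N p) (fderiv ℝ W p (W p)) = 0 := by
  -- pointwise facts on U
  have hZsξ : ∀ q ∈ U, eta (Zstar ξ N Z q) (ξ q) = 0 := fun q hq =>
    sproj_pair_xi _ _ _ (hξξ q hq) (hξN q hq)
  have hZsN : ∀ q ∈ U, eta (Zstar ξ N Z q) (N q) = 0 := fun q hq =>
    sproj_pair_N _ _ _ (hNN q hq) (hξN q hq)
  have hgpos : ∀ q ∈ U, 0 < eta (Zstar ξ N Z q) (Zstar ξ N Z q) := fun q hq =>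
    screen_pos (ξ q) (N q) _ (hξξ q hq) (hNN q hq) (hξN q hq)
      (hZsξ q hq) (hZsN q hq) (hZs0 q hq)
  have hsqrt_pos : ∀ q ∈ U, 0 < Real.sqrt (eta (Zstar ξ N Z q) (Zstar ξ N Z q)) :=
    fun q hq => Real.sqrt_pos.2 (hgpos q hq)
  -- T is a unit screen field on U
  have hTξ : ∀ q ∈ U, eta (T q) (ξ q) = 0 := by
    intro q hq; rw [hT q, eta_smul_left, hZsξ q hq]; ring
  have hTN : ∀ q ∈ U, eta (T q) (N q) = 0 := by
    intro q hq; rw [hT q, eta_smul_left, hZsN q hq]; ring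
  have hTT1 : ∀ q ∈ U, eta (T q) (T q) = 1 := by
    intro q hq
    rw [hT q, eta_smul_left, eta_smul_right]
    have hs := Real.mul_self_sqrt (le_of_lt (hgpos q hq))
    have hne : Real.sqrt (eta (Zstar ξ N Z q) (Zstar ξ N Z q)) ≠ 0 :=
      ne_of_gt (hsqrt_pos q hq)
    field_simp
    rw [sq, hs]
  have hWT1 : ∀ q ∈ U, eta (W q) (T q) = 0 := by
    intro q hq
    rw [hT q, eta_smul_right, hWZ q hq]; ring
  intro p hp
  -- derivatives at p
  have hξ' := (hξd p hp).hasFDerivAt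
  have hN' := (hNd p hp).hasFDerivAt
  have hW' := (hWd p hp).hasFDerivAt
  have hZ' : HasFDerivAt Z (0 : E 4 →L[ℝ] E 4) p := by
    have h := (hZd p hp).hasFDerivAt; rwa [hpar p hp] at h
  have ha := hasFDerivAt_eta hZ' hξ'
  have hb := hasFDerivAt_eta hZ' hN'
  -- derivative of Zstar with pairing formula
  obtain ⟨DS, hSd, hSpair⟩ : ∃ D : E 4 →L[ℝ] E 4, HasFDerivAt (Zstar ξ N Z) D p ∧
      ∀ v x : E 4, eta (ξ p) x = 0 → eta (N p) x = 0 →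
        eta (D v) x = -(eta (Z p) (N p) * eta (fderiv ℝ ξ p v) x)
          - eta (Z p) (ξ p) * eta (fderiv ℝ N p v) x := by
    refine ⟨_, (hZ'.sub (hb.smul hξ')).sub (ha.smul hN'), ?_⟩
    intro v x h1 h2
    simp only [ContinuousLinearMap.coe_sub', Pi.sub_apply, ContinuousLinearMap.add_apply,
      ContinuousLinearMap.coe_smul', Pi.smul_apply, ContinuousLinearMap.smulRight_apply,
      ContinuousLinearMap.zero_apply, ContinuousLinearMap.comp_apply,
      ContinuousLinearMap.prod_apply, IsBoundedBilinearMap.deriv_apply]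
    rw [eta_sub_left, eta_sub_left, eta_add_left, eta_add_left, eta_smul_left,
      eta_smul_left, eta_smul_left, eta_smul_left, eta_zero_left, h1, h2]
    ring
  -- the normalizing factor
  have hgd : HasFDerivAt (fun q => eta (Zstar ξ N Z q) (Zstar ξ N Z q))
      ((isBoundedBilinearMap_eta.deriv (Zstar ξ N Z p, Zstar ξ N Z p)).comp (DS.prod DS)) p :=
    hasFDerivAt_eta hSd hSd
  have hρd : DifferentiableAt ℝ
      (fun q => (Real.sqrt (eta (Zstar ξ N Z q) (Zstar ξ N Z q)))⁻¹) p := by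
    have h1 : DifferentiableAt ℝ
        (fun q => Real.sqrt (eta (Zstar ξ N Z q) (Zstar ξ N Z q))) p :=
      hgd.differentiableAt.sqrt (ne_of_gt (hgpos p hp))
    exact h1.inv (ne_of_gt (hsqrt_pos p hp))
  have hTfun : T = fun q =>
      (Real.sqrt (eta (Zstar ξ N Z q) (Zstar ξ N Z q)))⁻¹ • Zstar ξ N Z q := funext hT
  set ρ : E 4 → ℝ := fun q => (Real.sqrt (eta (Zstar ξ N Z q) (Zstar ξ N Z q)))⁻¹ with hρdef
  have hTd : HasFDerivAt T (ρ p • DS + (fderiv ℝ ρ p).smulRight (Zstar ξ N Z p)) p := by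
    rw [hTfun]
    exact hρd.hasFDerivAt.smul hSd
  have hTv : ∀ v, fderiv ℝ T p v = ρ p • DS v + fderiv ℝ ρ p v • Zstar ξ N Z p := by
    intro v
    rw [hTd.fderiv]
    simp [ContinuousLinearMap.add_apply, ContinuousLinearMap.coe_smul', Pi.smul_apply,
      ContinuousLinearMap.smulRight_apply]
  -- derivative facts from constancy on U
  have hnhds := hU.mem_nhds hp
  have k1 : ∀ v, eta (fderiv ℝ T p v) (T p) = 0 := by
    intro v
    have hev : (fun q => eta (T q) (T q)) =ᶠ[nhds p] (fun _ => (1:ℝ)) :=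
      Filter.eventuallyEq_of_mem hnhds (fun q hq => hTT1 q hq)
    have h0 : fderiv ℝ (fun q => eta (T q) (T q)) p = 0 := by
      rw [hev.fderiv_eq]; exact fderiv_const_apply 1
    have h := (hasFDerivAt_eta hTd hTd).fderiv
    rw [h0] at h
    have h2 := congrArg (fun L : E 4 →L[ℝ] ℝ => L v) h
    simp only [ContinuousLinearMap.zero_apply, eta_deriv_apply] at h2
    rw [← hTd.fderiv] at h2
    rw [eta_comm (T p) (fderiv ℝ T p v)] at h2
    linarith [h2.symm]
  have k2 : ∀ v, eta (fderiv ℝ W p v) (W p) = 0 := by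
    intro v
    have hev : (fun q => eta (W q) (W q)) =ᶠ[nhds p] (fun _ => (1:ℝ)) :=
      Filter.eventuallyEq_of_mem hnhds (fun q hq => hWW q hq)
    have h0 : fderiv ℝ (fun q => eta (W q) (W q)) p = 0 := by
      rw [hev.fderiv_eq]; exact fderiv_const_apply 1
    have h := (hasFDerivAt_eta hW' hW').fderiv
    rw [h0] at h
    have h2 := congrArg (fun L : E 4 →L[ℝ] ℝ => L v) h
    simp only [ContinuousLinearMap.zero_apply, eta_deriv_apply] at h2
    rw [eta_comm (W p) (fderiv ℝ W p v)] at h2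
    linarith [h2.symm]
  have k3 : ∀ v, eta (fderiv ℝ W p v) (T p) = - eta (fderiv ℝ T p v) (W p) := by
    intro v
    have hev : (fun q => eta (W q) (T q)) =ᶠ[nhds p] (fun _ => (0:ℝ)) :=
      Filter.eventuallyEq_of_mem hnhds (fun q hq => hWT1 q hq)
    have h0 : fderiv ℝ (fun q => eta (W q) (T q)) p = 0 := by
      rw [hev.fderiv_eq]; exact fderiv_const_apply 0
    have h := (hasFDerivAt_eta hW' hTd).fderiv
    rw [h0] at h
    have h2 := congrArg (fun L : E 4 →L[ℝ] ℝ => L v) h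
    simp only [ContinuousLinearMap.zero_apply, eta_deriv_apply] at h2
    rw [← hTd.fderiv] at h2
    rw [eta_comm (W p) (fderiv ℝ T p v)] at h2
    linarith [h2.symm]
  -- pairing of D_v T with W p
  have hSWp : eta (Zstar ξ N Z p) (W p) = 0 := by
    rw [eta_comm]; exact hWZ p hp
  have k4 : ∀ v, eta (fderiv ℝ T p v) (W p) = ρ p * eta (DS v) (W p) := by
    intro v
    rw [hTv v, eta_add_left, eta_smul_left, eta_smul_left, hSWp]
    ring
  -- screen conditions at p
  have hξT : eta (ξ p) (T p) = 0 := by rw [eta_comm]; exact hTξ p hp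
  have hNT : eta (N p) (T p) = 0 := by rw [eta_comm]; exact hTN p hp
  have hξW : eta (ξ p) (W p) = 0 := by rw [eta_comm]; exact hWξ p hp
  have hNW : eta (N p) (W p) = 0 := by rw [eta_comm]; exact hWN p hp
  have hξS : eta (ξ p) (Zstar ξ N Z p) = 0 := by rw [eta_comm]; exact hZsξ p hp
  have hNS : eta (N p) (Zstar ξ N Z p) = 0 := by rw [eta_comm]; exact hZsN p hp
  -- relation between DS and AZperp on screen vectors
  have hAZ : ∀ v x : E 4, eta (ξ p) x = 0 → eta (N p) x = 0 →
      eta (AZperp ξ N Z p v) x = eta (DS v) x := by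
    intro v x h1 h2
    unfold AZperp Astar AN
    rw [eta_add_left, eta_smul_left, eta_smul_left, eta_neg_left, eta_neg_left,
      eta_sproj_screen _ _ _ _ h1 h2, eta_sproj_screen _ _ _ _ h1 h2,
      hSpair v x h1 h2]
    ring
  -- derivative of g vanishes on screen directions
  have k6 : ∀ v : E 4, eta v (ξ p) = 0 → eta v (N p) = 0 →
      eta (DS v) (Zstar ξ N Z p) = 0 := by
    intro v hv1 hv2
    have hab := ha.mul hb
    have hR := (hab.const_mul (2:ℝ)).add hgd
    have hev : (fun q => eta (Z q) (Z q)) =ᶠ[nhds p]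
        (fun q => 2*(eta (Z q) (ξ q) * eta (Z q) (N q))
          + eta (Zstar ξ N Z q) (Zstar ξ N Z q)) :=
      Filter.eventuallyEq_of_mem hnhds (fun q hq =>
        eta_SS (ξ q) (N q) (Z q) (hξξ q hq) (hNN q hq) (hξN q hq))
    have hL2 := hR.congr_of_eventuallyEq hev
    have huniq := (hasFDerivAt_eta hZ' hZ').unique hL2
    have h3 := congrArg (fun L : E 4 →L[ℝ] ℝ => L v) huniq
    have habf : fderiv ℝ (fun q => eta (Z q) (ξ q) * eta (Z q) (N q)) p = _ := hab.fderiv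
    have hangv := hang p hp v hv1 hv2
    rw [habf] at hangv
    simp only [ContinuousLinearMap.add_apply, ContinuousLinearMap.coe_smul', Pi.smul_apply,
      eta_deriv_apply, ContinuousLinearMap.zero_apply, smul_eq_mul,
      eta_zero_left, eta_zero_right] at h3 hangv
    have hcomm := eta_comm (Zstar ξ N Z p) (DS v)
    linarith [h3, hangv, hcomm]
  -- η(AZperp v, T p) = 0 for screen v
  have hTeq : T p = ρ p • Zstar ξ N Z p := hT p
  have k7 : ∀ v : E 4, eta v (ξ p) = 0 → eta v (N p) = 0 →
      eta (DS v) (T p) = 0 := by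
    intro v hv1 hv2
    rw [hTeq, eta_smul_right, k6 v hv1 hv2]
    ring
  have hTpξ : eta (T p) (ξ p) = 0 := hTξ p hp
  have hTpN : eta (T p) (N p) = 0 := hTN p hp
  have hWpξ : eta (W p) (ξ p) = 0 := hWξ p hp
  have hWpN : eta (W p) (N p) = 0 := hWN p hp
  -- trace-free gives η(AZperp W, W) = 0
  have hAZTT : eta (AZperp ξ N Z p (T p)) (T p) = 0 := by
    rw [hAZ (T p) (T p) hξT hNT]
    exact k7 (T p) hTpξ hTpN
  have hAZWW : eta (AZperp ξ N Z p (W p)) (W p) = 0 := by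
    have h := htrace p hp
    rw [hAZTT] at h
    linarith
  -- symmetry gives η(AZperp T, W) = 0
  have hAZTW : eta (AZperp ξ N Z p (T p)) (W p) = 0 := by
    have hsym : eta (AZperp ξ N Z p (T p)) (W p) = eta (T p) (AZperp ξ N Z p (W p)) := by
      unfold AZperp
      rw [eta_add_left, eta_smul_left, eta_smul_left,
        hAsym p hp (T p) (W p) hTpξ hTpN hWpξ hWpN,
        hANsym p hp (T p) (W p) hTpξ hTpN hWpξ hWpN,
        eta_add_right, eta_smul_right, eta_smul_right]
    rw [hsym, eta_comm, hAZ (W p) (T p) hξT hNT]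
    exact k7 (W p) hWpξ hWpN
  -- the four scalar pairings
  have pDSTW : eta (DS (T p)) (W p) = 0 := by
    rw [← hAZ (T p) (W p) hξW hNW]; exact hAZTW
  have pDSWW : eta (DS (W p)) (W p) = 0 := by
    rw [← hAZ (W p) (W p) hξW hNW]; exact hAZWW
  have u1T : eta (fderiv ℝ T p (T p)) (T p) = 0 := k1 (T p)
  have u1W : eta (fderiv ℝ T p (T p)) (W p) = 0 := by rw [k4 (T p), pDSTW]; ring
  have u3T : eta (fderiv ℝ T p (W p)) (T p) = 0 := k1 (W p)
  have u3W : eta (fderiv ℝ T p (W p)) (W p) = 0 := by rw [k4 (W p), pDSWW]; ring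
  have u2W : eta (fderiv ℝ W p (T p)) (W p) = 0 := k2 (T p)
  have u2T : eta (fderiv ℝ W p (T p)) (T p) = 0 := by rw [k3 (T p), u1W]; ring
  have u4W : eta (fderiv ℝ W p (W p)) (W p) = 0 := k2 (W p)
  have u4T : eta (fderiv ℝ W p (W p)) (T p) = 0 := by rw [k3 (W p), u3W]; ring
  -- final assembly
  have hfin : ∀ u : E 4, eta u (T p) = 0 → eta u (W p) = 0 →
      sproj (ξ p) (N p) u = 0 := by
    intro u huT huW
    apply screen_basis_zero (ξ p) (N p) (T p) (W p) _
      (hξξ p hp) (hNN p hp) (hξN p hp)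
      hTpξ hTpN (hTT1 p hp) hWpξ hWpN (hWW p hp)
      (by rw [eta_comm]; exact hWT1 p hp)
      (sproj_pair_xi _ _ _ (hξξ p hp) (hξN p hp))
      (sproj_pair_N _ _ _ (hNN p hp) (hξN p hp))
      (by rw [eta_sproj_screen _ _ _ _ hξT hNT]; exact huT)
      (by rw [eta_sproj_screen _ _ _ _ hξW hNW]; exact huW)
  exact ⟨hfin _ u1T u1W, hfin _ u2T u2W, hfin _ u3T u3W, hfin _ u4T u4W⟩

end
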